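/- arXiv:2302.05013 — 2 statements merged into one kernel-verified Lean document; each statement's English description precedes it below -/
import Mathlib

section
/- Let Ω be a bounded domain in ℂⁿ, ψ ∈ C(cl(Ω)), φ ∈ L^∞(Ω), and h : Ω → (0,∞) a continuous function. If the Toeplitz operator T_φ is compact on A²(Ω,h), then the Toeplitz operator T_{φψ} is compact on A²(Ω,h). -/
open MeasureTheory Metric Complex Bornology
open scoped ENNReal NNReal ComplexConjugate

noncomputable section

/-- `ℂⁿ` as a Euclidean (Hermitian) space. -/
abbrev CE (n : ℕ) : Type := EuclideanSpace ℂ (Fin n)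

instance (n : ℕ) : MeasurableSpace (CE n) := MeasurableSpace.comap WithLp.ofLp MeasurableSpace.pi

instance (n : ℕ) : BorelSpace (CE n) := PiLp.borelSpace 2 (X := fun _ : Fin n => ℂ)

/-- Lebesgue measure on `ℂⁿ`. -/
instance (n : ℕ) : MeasureSpace (CE n) := ⟨(Measure.pi fun _ => volume).map (MeasurableEquiv.toLp 2 (Fin n → ℂ))⟩

/-- A function is plurisubharmonic on a set if it is upper semicontinuous there and
satisfies the sub-mean value inequality on circles in every complex line. -/
def PlurisubharmonicOn {n : ℕ} (u : CE n → ℝ) (s : Set (CE n)) : Prop :=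
  UpperSemicontinuousOn u s ∧
    ∀ a b : CE n, ∀ R : ℝ, 0 < R →
      (∀ t : ℂ, ‖t‖ ≤ R → a + t • b ∈ s) →
      u a ≤ (2 * Real.pi)⁻¹ *
        ∫ θ in (0:ℝ)..(2 * Real.pi), u (a + ((R : ℂ) * Complex.exp (θ * Complex.I)) • b)

/-- A domain `Ω ⊆ ℂⁿ` is pseudoconvex if `-log dist(·, bΩ)` is plurisubharmonic on `Ω`. -/
def Pseudoconvex {n : ℕ} (Ω : Set (CE n)) : Prop :=
  PlurisubharmonicOn (fun z => -Real.log (infDist z Ωᶜ)) Ω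

/-- A bounded domain has Lipschitz boundary if near each boundary point, after choosing a unit
direction `ν`, the domain is the strict subgraph of a Lipschitz function over the real
hyperplane orthogonal to `ν`. -/
def HasLipschitzBoundary {n : ℕ} (Ω : Set (CE n)) : Prop :=
  ∀ p ∈ frontier Ω, ∃ ν : CE n, ‖ν‖ = 1 ∧ ∃ ε > 0, ∃ (L : NNReal) (ψ : CE n → ℝ),
    LipschitzWith L ψ ∧
      ∀ x ∈ ball p ε, (x ∈ Ω ↔ (inner ℂ x ν : ℂ).re < ψ (x - ((inner ℂ x ν : ℂ).re • ν)))

/-- A Lipschitz defining function for `Ω`: a (globally) Lipschitz function with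
`Ω = {ρ < 0}` which is comparable to the negative boundary distance on `Ω`. -/
def IsLipschitzDefiningFunction {n : ℕ} (Ω : Set (CE n)) (ρ : CE n → ℝ) : Prop :=
  (∃ L : NNReal, LipschitzWith L ρ) ∧ Ω = {z | ρ z < 0} ∧
    ∃ c C : ℝ, 0 < c ∧ 0 < C ∧
      ∀ z ∈ Ω, c * infDist z Ωᶜ ≤ -ρ z ∧ -ρ z ≤ C * infDist z Ωᶜ

/-- The measure `h dV` on `Ω ⊆ ℂⁿ`; `L²(Ω, h)` is `Lp ℂ 2` of this measure. -/
def wMeasure {n : ℕ} (Ω : Set (CE n)) (h : CE n → ℝ) : Measure (CE n) :=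
  (volume.restrict Ω).withDensity fun z => ENNReal.ofReal (h z)

/-- An element of `L²(Ω, h)` belongs to the Bergman space `A²(Ω, h)` if it has a
representative holomorphic on `Ω`. -/
def IsBergmanFun {n : ℕ} (Ω : Set (CE n)) (μ : Measure (CE n)) (f : Lp ℂ 2 μ) : Prop :=
  ∃ g : CE n → ℂ, DifferentiableOn ℂ g Ω ∧ ∀ᵐ z ∂μ, f z = g z

/-- The Bergman space `A²(Ω, h)` as a subset of `L²(Ω, h)`. -/
def bergmanSet {n : ℕ} (Ω : Set (CE n)) (μ : Measure (CE n)) : Set (Lp ℂ 2 μ) :=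
  {f | IsBergmanFun Ω μ f}

/-- `P` is the Bergman projection: the orthogonal projection of `L²(Ω, h)` onto `A²(Ω, h)`. -/
def IsBergmanProjection {n : ℕ} (Ω : Set (CE n)) (μ : Measure (CE n))
    (P : Lp ℂ 2 μ →L[ℂ] Lp ℂ 2 μ) : Prop :=
  (∀ f, IsBergmanFun Ω μ (P f)) ∧ (∀ f, IsBergmanFun Ω μ f → P f = f) ∧
    ∀ f g : Lp ℂ 2 μ, IsBergmanFun Ω μ g → (inner ℂ (f - P f) g : ℂ) = 0

/-- `M` is the operator of multiplication by `φ` on `L²(Ω, h)`. -/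
def IsMultiplicationOp {n : ℕ} (μ : Measure (CE n)) (φ : CE n → ℂ)
    (M : Lp ℂ 2 μ →L[ℂ] Lp ℂ 2 μ) : Prop :=
  ∀ f : Lp ℂ 2 μ, (M f : CE n → ℂ) =ᵐ[μ] fun z => φ z * f z

/-- A (bounded linear) map `T` is a compact operator on the subspace `A` if the image
of the unit ball of `A` is relatively compact. -/
def CompactOnSet {H K : Type*} [NormedAddCommGroup H] [NormedAddCommGroup K]
    (T : H → K) (A : Set H) : Prop :=
  IsCompact (closure (T '' (A ∩ Metric.closedBall 0 1)))

namespace St4Aux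

variable {α : Type*} [MeasurableSpace α] {μ : Measure α}

open scoped Classical in
/-- Multiplication of an `L²` element by a function (junk value if not `MemLp`). -/
def mulLp (u : α → ℂ) (f : Lp ℂ 2 μ) : Lp ℂ 2 μ :=
  if h : MemLp (fun z => u z * f z) 2 μ then h.toLp _ else 0

lemma memℒp_mul {u : α → ℂ} (hu : MemLp u ⊤ μ) (f : Lp ℂ 2 μ) :
    MemLp (fun z => u z * f z) 2 μ := by
  have h := (Lp.memLp f).smul (r := 2) hu
  exact h.ae_eq (Filter.Eventually.of_forall fun z => by simp [Pi.smul_apply, smul_eq_mul])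

lemma coeFn_mulLp {u : α → ℂ} (hu : MemLp u ⊤ μ) (f : Lp ℂ 2 μ) :
    (mulLp u f : α → ℂ) =ᵐ[μ] fun z => u z * f z := by
  classical
  rw [mulLp, dif_pos (memℒp_mul hu f)]
  exact MemLp.coeFn_toLp _

lemma mulLp_congr_ae {u u' : α → ℂ} (hu : MemLp u ⊤ μ) (hu' : MemLp u' ⊤ μ)
    (h : u =ᵐ[μ] u') (f : Lp ℂ 2 μ) : mulLp u f = mulLp u' f := by
  apply Lp.ext
  filter_upwards [coeFn_mulLp hu f, coeFn_mulLp hu' f, h] with z h1 h2 h3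
  rw [h1, h3, ← h2]

lemma mulLp_add_symbol {u v : α → ℂ} (hu : MemLp u ⊤ μ) (hv : MemLp v ⊤ μ) (f : Lp ℂ 2 μ) :
    mulLp (u + v) f = mulLp u f + mulLp v f := by
  have huv : MemLp (u + v) ⊤ μ := hu.add hv
  apply Lp.ext
  filter_upwards [coeFn_mulLp huv f, coeFn_mulLp hu f, coeFn_mulLp hv f,
    Lp.coeFn_add (mulLp u f) (mulLp v f)] with z h1 h2 h3 h4
  simp only [h1, h4, Pi.add_apply, h2, h3, add_mul]

lemma mulLp_smul_symbol {u : α → ℂ} (c : ℂ) (hu : MemLp u ⊤ μ) (f : Lp ℂ 2 μ) :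
    mulLp (c • u) f = c • mulLp u f := by
  have hcu : MemLp (c • u) ⊤ μ := hu.const_smul c
  apply Lp.ext
  filter_upwards [coeFn_mulLp hcu f, coeFn_mulLp hu f,
    Lp.coeFn_smul c (mulLp u f)] with z h1 h2 h3
  simp only [h1, h3, Pi.smul_apply, h2, smul_eq_mul, mul_assoc]

lemma mulLp_sub {u : α → ℂ} (hu : MemLp u ⊤ μ) (f g : Lp ℂ 2 μ) :
    mulLp u (f - g) = mulLp u f - mulLp u g := by
  apply Lp.ext
  filter_upwards [coeFn_mulLp hu (f - g), coeFn_mulLp hu f, coeFn_mulLp hu g,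
    Lp.coeFn_sub (mulLp u f) (mulLp u g), Lp.coeFn_sub f g] with z h1 h2 h3 h4 h5
  simp only [h1, h4, Pi.sub_apply, h2, h3, h5, mul_sub]

lemma norm_mulLp_le {u : α → ℂ} (hum : AEStronglyMeasurable u μ) {C : ℝ} (hC : 0 ≤ C)
    (hbound : ∀ᵐ z ∂μ, ‖u z‖ ≤ C) (f : Lp ℂ 2 μ) : ‖mulLp u f‖ ≤ C * ‖f‖ := by
  have hu : MemLp u ⊤ μ := memLp_top_of_bound hum C hbound
  have h1 : ‖mulLp u f‖ = (eLpNorm (fun z => u z * f z) 2 μ).toReal := by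
    rw [Lp.norm_def, eLpNorm_congr_ae (coeFn_mulLp hu f)]
  have h2 : eLpNorm (fun z => u z * f z) 2 μ ≤ ENNReal.ofReal C * eLpNorm (f : α → ℂ) 2 μ := by
    have h3 : eLpNorm (u • (f : α → ℂ)) 2 μ ≤ eLpNorm u ∞ μ * eLpNorm (f : α → ℂ) 2 μ :=
      eLpNorm_smul_le_eLpNorm_top_mul_eLpNorm 2 (Lp.aestronglyMeasurable f) u
    have h4 : (u • (f : α → ℂ)) = fun z => u z * f z := by
      funext z; simp [Pi.smul_apply, smul_eq_mul]
    rw [h4] at h3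
    refine h3.trans (mul_le_mul_left ?_ _)
    rw [eLpNorm_exponent_top]
    exact eLpNormEssSup_le_of_ae_bound hbound
  rw [h1, Lp.norm_def]
  calc (eLpNorm (fun z => u z * f z) 2 μ).toReal
      ≤ (ENNReal.ofReal C * eLpNorm (f : α → ℂ) 2 μ).toReal := by
        apply ENNReal.toReal_mono _ h2
        exact (ENNReal.mul_lt_top ENNReal.ofReal_lt_top (Lp.memLp f).2).ne
    _ = C * (eLpNorm (f : α → ℂ) 2 μ).toReal := by
        rw [ENNReal.toReal_mul, ENNReal.toReal_ofReal hC]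

end St4Aux

open scoped Pointwise

namespace St4Aux2

/-- Totally bounded via arbitrarily good totally bounded approximations. -/
lemma tb_approx {E : Type*} [PseudoMetricSpace E] {s : Set E}
    (h : ∀ δ > (0:ℝ), ∃ t : Set E, TotallyBounded t ∧ ∀ x ∈ s, ∃ y ∈ t, dist x y ≤ δ) :
    TotallyBounded s := by
  rw [Metric.totallyBounded_iff]
  intro ε hε
  obtain ⟨t, ht, happrox⟩ := h (ε / 3) (by linarith)
  obtain ⟨c, hcfin, hccov⟩ := Metric.totallyBounded_iff.mp ht (ε / 3) (by linarith)
  refine ⟨c, hcfin, fun x hx => ?_⟩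
  obtain ⟨y, hyt, hxy⟩ := happrox x hx
  obtain ⟨u, hu, hyu⟩ := Set.mem_iUnion₂.mp (hccov hyt)
  refine Set.mem_iUnion₂.mpr ⟨u, hu, ?_⟩
  rw [Metric.mem_ball] at hyu ⊢
  calc dist x u ≤ dist x y + dist y u := dist_triangle _ _ _
    _ < ε / 3 + ε / 3 := by exact add_lt_add_of_le_of_lt hxy hyu
    _ < ε := by linarith

/-- If `F` is dominated by `G` in a Lipschitz fashion on `B` and `G '' B` is totally
bounded, then so is `F '' B`. -/
lemma tb_dominated {E F' β : Type*} [PseudoMetricSpace E] [PseudoMetricSpace F'] {B : Set β}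
    {F : β → E} {G : β → F'} {K : ℝ} (hK : 0 ≤ K)
    (hdom : ∀ x ∈ B, ∀ y ∈ B, dist (F x) (F y) ≤ K * dist (G x) (G y))
    (hG : TotallyBounded (G '' B)) : TotallyBounded (F '' B) := by
  classical
  rcases B.eq_empty_or_nonempty with hB | ⟨b0, hb0⟩
  · rw [hB, Set.image_empty]; exact totallyBounded_empty
  rw [Metric.totallyBounded_iff]
  intro ε hε
  have hδ : (0:ℝ) < ε / (K + 1) := by positivity
  have hent : {p : F' × F' | dist p.1 p.2 < ε / (K + 1)} ∈ uniformity F' :=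
    Metric.dist_mem_uniformity hδ
  obtain ⟨t, hts, htfin, hcov⟩ := totallyBounded_iff_subset.mp hG _ hent
  have hsel : ∀ y : F', ∃ b, b ∈ B ∧ (y ∈ t → G b = y) := by
    intro y
    by_cases hy : y ∈ t
    · obtain ⟨x, hx, hGx⟩ := hts hy
      exact ⟨x, hx, fun _ => hGx⟩
    · exact ⟨b0, hb0, fun h' => absurd h' hy⟩
  choose sel hselB hselG using hsel
  refine ⟨(fun y => F (sel y)) '' t, htfin.image _, fun x hx => ?_⟩
  obtain ⟨b, hb, rfl⟩ := hx
  obtain ⟨y, hy, hdy⟩ := Set.mem_iUnion₂.mp (hcov ⟨b, hb, rfl⟩)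
  refine Set.mem_iUnion₂.mpr ⟨F (sel y), Set.mem_image_of_mem _ hy, ?_⟩
  rw [Metric.mem_ball]
  have h1 : dist (F b) (F (sel y)) ≤ K * dist (G b) (G (sel y)) :=
    hdom b hb (sel y) (hselB y)
  have h2 : dist (G b) (G (sel y)) < ε / (K + 1) := by
    rw [hselG y hy]; exact hdy
  calc dist (F b) (F (sel y)) ≤ K * dist (G b) (G (sel y)) := h1
    _ ≤ K * (ε / (K + 1)) := by
        apply mul_le_mul_of_nonneg_left h2.le hK
    _ < ε := by
        have h4 : K * (ε / (K + 1)) < (K + 1) * (ε / (K + 1)) :=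
          mul_lt_mul_of_pos_right (lt_add_one K) hδ
        have h5 : (K + 1) * (ε / (K + 1)) = ε := by
          field_simp
        linarith

/-- Sum of two totally bounded sets is totally bounded. -/
lemma tb_add {E : Type*} [SeminormedAddCommGroup E] {s t : Set E}
    (hs : TotallyBounded s) (ht : TotallyBounded t) : TotallyBounded (s + t) := by
  rw [Metric.totallyBounded_iff]
  intro ε hε
  obtain ⟨c, hcfin, hccov⟩ := Metric.totallyBounded_iff.mp hs (ε / 2) (by linarith)
  obtain ⟨d, hdfin, hdcov⟩ := Metric.totallyBounded_iff.mp ht (ε / 2) (by linarith)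
  refine ⟨c + d, hcfin.add hdfin, fun x hx => ?_⟩
  obtain ⟨a, ha, b, hb, rfl⟩ := hx
  obtain ⟨a', ha', haa⟩ := Set.mem_iUnion₂.mp (hccov ha)
  obtain ⟨b', hb', hbb⟩ := Set.mem_iUnion₂.mp (hdcov hb)
  refine Set.mem_iUnion₂.mpr ⟨a' + b', Set.add_mem_add ha' hb', ?_⟩
  rw [Metric.mem_ball] at haa hbb ⊢
  calc dist (a + b) (a' + b') ≤ dist a a' + dist b b' := dist_add_add_le _ _ _ _
    _ < ε / 2 + ε / 2 := add_lt_add haa hbb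
    _ = ε := by ring

end St4Aux2
namespace St4Aux3
open St4Aux St4Aux2

variable {n : ℕ} {Ω : Set (CE n)} {μ : Measure (CE n)}

lemma proj_selfadj {P : Lp ℂ 2 μ →L[ℂ] Lp ℂ 2 μ} (hP : IsBergmanProjection Ω μ P)
    (v u : Lp ℂ 2 μ) : (inner ℂ (P v) u : ℂ) = inner ℂ v (P u) := by
  have h1 : (inner ℂ (P v) (u - P u) : ℂ) = 0 := by
    rw [← inner_conj_symm, hP.2.2 u (P v) (hP.1 v), map_zero]
  have h2 : (inner ℂ (v - P v) (P u) : ℂ) = 0 := hP.2.2 v (P u) (hP.1 u)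
  have e1 : (inner ℂ (P v) u : ℂ) = inner ℂ (P v) (P u) := by
    conv_lhs => rw [show u = P u + (u - P u) by abel]
    rw [inner_add_right, h1, add_zero]
  have e2 : (inner ℂ v (P u) : ℂ) = inner ℂ (P v) (P u) := by
    conv_lhs => rw [show v = P v + (v - P v) by abel]
    rw [inner_add_left, h2, add_zero]
  rw [e1, e2]

lemma isBergman_add {f g : Lp ℂ 2 μ} (hf : IsBergmanFun Ω μ f) (hg : IsBergmanFun Ω μ g) :
    IsBergmanFun Ω μ (f + g) := by
  obtain ⟨F, hF, hFf⟩ := hf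
  obtain ⟨G, hG, hGg⟩ := hg
  refine ⟨F + G, hF.add hG, ?_⟩
  filter_upwards [hFf, hGg, Lp.coeFn_add f g] with z h1 h2 h3
  rw [h3, Pi.add_apply, h1, h2, Pi.add_apply]

lemma isBergman_smul (c : ℂ) {f : Lp ℂ 2 μ} (hf : IsBergmanFun Ω μ f) :
    IsBergmanFun Ω μ (c • f) := by
  obtain ⟨F, hF, hFf⟩ := hf
  refine ⟨c • F, hF.const_smul c, ?_⟩
  filter_upwards [hFf, Lp.coeFn_smul c f] with z h1 h2
  simp [h2, h1]

lemma isBergman_zero : IsBergmanFun Ω μ (0 : Lp ℂ 2 μ) := by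
  refine ⟨0, differentiableOn_const 0, ?_⟩
  filter_upwards [Lp.coeFn_zero ℂ 2 μ] with z h1
  rw [h1, Pi.zero_apply]

lemma isBergman_mulLp {v : CE n → ℂ} (hvd : DifferentiableOn ℂ v Ω) (hvm : MemLp v ⊤ μ)
    {f : Lp ℂ 2 μ} (hf : IsBergmanFun Ω μ f) : IsBergmanFun Ω μ (mulLp v f) := by
  obtain ⟨F, hF, hFf⟩ := hf
  refine ⟨fun z => v z * F z, hvd.mul hF, ?_⟩
  filter_upwards [hFf, coeFn_mulLp hvm f] with z h1 h2
  rw [h2, h1]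

lemma key {P M : Lp ℂ 2 μ →L[ℂ] Lp ℂ 2 μ} (hP : IsBergmanProjection Ω μ P)
    {φ : CE n → ℂ} (hM : IsMultiplicationOp μ φ M) (hφ : MemLp φ ⊤ μ)
    {w v : CE n → ℂ} (hwm : MemLp w ⊤ μ) (hvm : MemLp v ⊤ μ)
    (hwd : DifferentiableOn ℂ w Ω) {Cw : ℝ} (hCw : 0 ≤ Cw)
    (hwb : ∀ᵐ z ∂μ, ‖w z‖ ≤ Cw) (f : Lp ℂ 2 μ) :
    ‖P (mulLp (fun z => φ z * ((starRingEnd ℂ) (w z) * v z)) f)‖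
      ≤ Cw * ‖P (M (mulLp v f))‖ := by
  have hwsm : AEStronglyMeasurable w μ := hwm.1
  have hwstar : MemLp (fun z => (starRingEnd ℂ) (w z)) ⊤ μ := by
    apply memLp_top_of_bound (Complex.continuous_conj.comp_aestronglyMeasurable hwsm) Cw
    filter_upwards [hwb] with z hz
    simpa using hz
  have h1 : MemLp (fun z => (starRingEnd ℂ) (w z) * v z) ⊤ μ := by
    have := hvm.smul (r := ⊤) hwstar
    exact this.ae_eq (Filter.Eventually.of_forall fun z => by simp [smul_eq_mul])
  have hum : MemLp (fun z => φ z * ((starRingEnd ℂ) (w z) * v z)) ⊤ μ := by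
    have := h1.smul (r := ⊤) hφ
    exact this.ae_eq (Filter.Eventually.of_forall fun z => by simp [smul_eq_mul])
  set u : CE n → ℂ := fun z => φ z * ((starRingEnd ℂ) (w z) * v z) with hu_def
  set y := P (mulLp u f) with hy_def
  have hy_berg : IsBergmanFun Ω μ y := hP.1 _
  have hPy : P y = y := hP.2.1 y hy_berg
  have h2 : (inner ℂ y y : ℂ) = inner ℂ (mulLp u f) y := by
    calc (inner ℂ y y : ℂ) = inner ℂ (P (mulLp u f)) y := rfl
      _ = inner ℂ (mulLp u f) (P y) := proj_selfadj hP _ _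
      _ = inner ℂ (mulLp u f) y := by rw [hPy]
  have h3 : (inner ℂ (mulLp u f) y : ℂ) = inner ℂ (M (mulLp v f)) (mulLp w y) := by
    rw [MeasureTheory.L2.inner_def, MeasureTheory.L2.inner_def]
    apply integral_congr_ae
    filter_upwards [coeFn_mulLp hum f, hM (mulLp v f), coeFn_mulLp hvm f,
      coeFn_mulLp hwm y] with z e1 e2 e3 e4
    rw [e1, e2, e3, e4, hu_def]
    simp only [RCLike.inner_apply, map_mul, Complex.conj_conj]
    ring
  have hwy_berg : IsBergmanFun Ω μ (mulLp w y) := isBergman_mulLp hwd hwm hy_berg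
  have h4 : (inner ℂ (M (mulLp v f)) (mulLp w y) : ℂ)
      = inner ℂ (P (M (mulLp v f))) (mulLp w y) := by
    have h5 := hP.2.2 (M (mulLp v f)) (mulLp w y) hwy_berg
    rw [inner_sub_left] at h5
    linear_combination h5
  have h6 : ‖y‖ * ‖y‖ ≤ (Cw * ‖P (M (mulLp v f))‖) * ‖y‖ := by
    calc ‖y‖ * ‖y‖ = RCLike.re (inner ℂ y y : ℂ) :=
          (@inner_self_eq_norm_mul_norm ℂ _ _ _ _ y).symm
      _ ≤ ‖(inner ℂ y y : ℂ)‖ := RCLike.re_le_norm _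
      _ = ‖(inner ℂ (P (M (mulLp v f))) (mulLp w y) : ℂ)‖ := by rw [h2, h3, h4]
      _ ≤ ‖P (M (mulLp v f))‖ * ‖mulLp w y‖ := norm_inner_le_norm _ _
      _ ≤ ‖P (M (mulLp v f))‖ * (Cw * ‖y‖) :=
          mul_le_mul_of_nonneg_left (norm_mulLp_le hwsm hCw hwb y) (norm_nonneg _)
      _ = (Cw * ‖P (M (mulLp v f))‖) * ‖y‖ := by ring
  rcases eq_or_lt_of_le (norm_nonneg y) with hy0 | hy0
  · rw [← hy0]
    positivity
  · exact le_of_mul_le_mul_right h6 hy0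

end St4Aux3

theorem statement4 {n : ℕ} (Ω : Set (CE n)) (hΩ : IsOpen Ω) (hconn : IsConnected Ω)
    (hbdd : IsBounded Ω) (h : CE n → ℝ) (hhc : ContinuousOn h Ω) (hhpos : ∀ z ∈ Ω, 0 < h z)
    (ψ : CE n → ℂ) (hψ : ContinuousOn ψ (closure Ω))
    (φ : CE n → ℂ) (hφ : MemLp φ ⊤ (wMeasure Ω h))
    (P M M' : Lp ℂ 2 (wMeasure Ω h) →L[ℂ] Lp ℂ 2 (wMeasure Ω h))
    (hP : IsBergmanProjection Ω (wMeasure Ω h) P)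
    (hM : IsMultiplicationOp (wMeasure Ω h) φ M)
    (hM' : IsMultiplicationOp (wMeasure Ω h) (fun z => φ z * ψ z) M')
    (hT : CompactOnSet (P ∘L M) (bergmanSet Ω (wMeasure Ω h))) :
    CompactOnSet (P ∘L M') (bergmanSet Ω (wMeasure Ω h)) := by
  classical
  open St4Aux St4Aux2 St4Aux3 in
  have hμ_def : True := trivial
  have hΩmeas : MeasurableSet Ω := hΩ.measurableSet
  have hae_mem : ∀ᵐ z ∂(wMeasure Ω h), z ∈ Ω := by
    have h1 : ∀ᵐ z ∂(volume.restrict Ω), z ∈ Ω := ae_restrict_mem hΩmeas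
    exact h1.filter_mono (withDensity_absolutelyContinuous _ _).ae_le
  have hclcomp : IsCompact (closure Ω) :=
    Metric.isCompact_of_isClosed_isBounded isClosed_closure hbdd.closure
  haveI : CompactSpace (closure Ω) := isCompact_iff_compactSpace.mp hclcomp
  -- bound for φ
  set Kφ : ℝ := (eLpNorm φ ⊤ (wMeasure Ω h)).toReal with hKφ_def
  have hKφ0 : 0 ≤ Kφ := ENNReal.toReal_nonneg
  have hφae : ∀ᵐ z ∂(wMeasure Ω h), ‖φ z‖ ≤ Kφ := by
    filter_upwards [MeasureTheory.enorm_ae_le_eLpNormEssSup φ (wMeasure Ω h)] with z hz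
    calc ‖φ z‖ = ((‖φ z‖₊ : ℝ≥0∞)).toReal := by simp
      _ ≤ (eLpNormEssSup φ (wMeasure Ω h)).toReal := by
          apply ENNReal.toReal_mono _ hz
          rw [← eLpNorm_exponent_top]
          exact hφ.2.ne
      _ = Kφ := by rw [hKφ_def, eLpNorm_exponent_top]
  -- the extension operator from C(closure Ω, ℂ) to global functions
  set ex : C(closure Ω, ℂ) → CE n → ℂ :=
    fun q z => if hz : z ∈ closure Ω then q ⟨z, hz⟩ else 0 with hex_def
  have hex_val : ∀ (q : C(closure Ω, ℂ)) (z : CE n) (hz : z ∈ closure Ω),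
      ex q z = q ⟨z, hz⟩ := by
    intro q z hz
    rw [hex_def]
    exact dif_pos hz
  have hex_cont : ∀ q : C(closure Ω, ℂ), ContinuousOn (ex q) (closure Ω) := by
    intro q
    rw [continuousOn_iff_continuous_restrict]
    have : (closure Ω).restrict (ex q) = ⇑q := by
      funext x
      exact hex_val q x x.2
    rw [show (closure Ω).domRestrict (ex q) = ⇑q from this]
    exact q.continuous
  have hex_sm : ∀ q : C(closure Ω, ℂ), AEStronglyMeasurable (ex q) (wMeasure Ω h) := by
    intro q
    have h1 : AEStronglyMeasurable (ex q) (volume.restrict Ω) :=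
      ContinuousOn.aestronglyMeasurable ((hex_cont q).mono subset_closure) hΩmeas
    exact h1.mono_ac (withDensity_absolutelyContinuous _ _)
  have hex_bd : ∀ (q : C(closure Ω, ℂ)) (z : CE n), ‖ex q z‖ ≤ ‖q‖ := by
    intro q z
    rw [hex_def]
    dsimp only
    split
    · exact q.norm_coe_le_norm _
    · simpa using norm_nonneg q
  have hex_mem : ∀ q : C(closure Ω, ℂ), MemLp (ex q) ⊤ (wMeasure Ω h) := fun q =>
    memLp_top_of_bound (hex_sm q) _ (Filter.Eventually.of_forall (hex_bd q))
  have hsym_mem : ∀ q : C(closure Ω, ℂ), MemLp (fun z => φ z * ex q z) ⊤ (wMeasure Ω h) := by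
    intro q
    have h1 := (hex_mem q).smul (r := ⊤) hφ
    exact h1.ae_eq (Filter.Eventually.of_forall fun z => by simp [smul_eq_mul])
  -- the unit "ball" of the Bergman space
  set B : Set (Lp ℂ 2 (wMeasure Ω h)) := bergmanSet Ω (wMeasure Ω h) ∩ Metric.closedBall 0 1 with hB_def
  have hTB_base : TotallyBounded ((fun f => P (M f)) '' B) :=
    (hT.totallyBounded).subset subset_closure
  -- scaling into the unit ball
  have hscale : ∀ C : ℝ, 0 < C → ∀ g : Lp ℂ 2 (wMeasure Ω h), g ∈ bergmanSet Ω (wMeasure Ω h) → ‖g‖ ≤ C →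
      ∃ b ∈ B, g = (C : ℂ) • b := by
    intro C hC g hg hgC
    have hCne : (C : ℂ) ≠ 0 := by
      simpa using ne_of_gt hC
    refine ⟨(C : ℂ)⁻¹ • g, ⟨isBergman_smul _ hg, ?_⟩, ?_⟩
    · rw [Metric.mem_closedBall, dist_zero_right, norm_smul]
      have : ‖(C : ℂ)⁻¹‖ = C⁻¹ := by
        rw [norm_inv]
        simp [Complex.norm_real, abs_of_pos hC]
      rw [this]
      calc C⁻¹ * ‖g‖ ≤ C⁻¹ * C := by
            apply mul_le_mul_of_nonneg_left hgC (inv_nonneg.mpr hC.le)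
        _ = 1 := inv_mul_cancel₀ (ne_of_gt hC)
    · rw [smul_smul, mul_inv_cancel₀ hCne, one_smul]
  -- the coordinate functions
  set coordCM : Fin n → C(closure Ω, ℂ) := fun i =>
    ⟨fun x => EuclideanSpace.proj (𝕜 := ℂ) i (x : CE n),
      ((EuclideanSpace.proj (𝕜 := ℂ) i).continuous.comp continuous_subtype_val)⟩
    with hcoord_def
  set Scoord : Set C(closure Ω, ℂ) := Set.range coordCM with hScoord_def
  -- monomials decompose as (conj w) * v with w, v holomorphic
  have hmono : ∀ q ∈ Submonoid.closure (Scoord ∪ star Scoord),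
      ∃ w v : CE n → ℂ, Continuous w ∧ Continuous v ∧
        DifferentiableOn ℂ w Ω ∧ DifferentiableOn ℂ v Ω ∧
        ∀ x : closure Ω, q x = (starRingEnd ℂ) (w x) * v x := by
    intro q hq
    induction hq using Submonoid.closure_induction with
    | mem x hx =>
      rcases hx with hx | hx
      · obtain ⟨i, rfl⟩ := hx
        refine ⟨fun _ => 1, fun z => EuclideanSpace.proj (𝕜 := ℂ) i z, continuous_const,
          (EuclideanSpace.proj (𝕜 := ℂ) i).continuous,
          (differentiable_const _).differentiableOn,
          (EuclideanSpace.proj (𝕜 := ℂ) i).differentiable.differentiableOn, ?_⟩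
        intro x
        simp [hcoord_def]
      · rw [Set.mem_star] at hx
        obtain ⟨i, hi⟩ := hx
        have hxq : x = star (coordCM i) := by
          rw [hi, star_star]
        subst hxq
        refine ⟨fun z => EuclideanSpace.proj (𝕜 := ℂ) i z, fun _ => 1,
          (EuclideanSpace.proj (𝕜 := ℂ) i).continuous, continuous_const,
          (EuclideanSpace.proj (𝕜 := ℂ) i).differentiable.differentiableOn,
          (differentiable_const _).differentiableOn, ?_⟩
        intro x
        simp [hcoord_def]
    | one =>
      refine ⟨fun _ => 1, fun _ => 1, continuous_const, continuous_const,
        (differentiable_const _).differentiableOn, (differentiable_const _).differentiableOn, ?_⟩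
      intro x
      simp
    | mul a b ha hb iha ihb =>
      obtain ⟨w1, v1, hw1c, hv1c, hw1d, hv1d, h1⟩ := iha
      obtain ⟨w2, v2, hw2c, hv2c, hw2d, hv2d, h2⟩ := ihb
      refine ⟨fun z => w1 z * w2 z, fun z => v1 z * v2 z, hw1c.mul hw2c, hv1c.mul hv2c,
        hw1d.mul hw2d, hv1d.mul hv2d, ?_⟩
      intro x
      rw [ContinuousMap.mul_apply, h1 x, h2 x]
      simp only [map_mul]
      ring
  -- total boundedness for monomial symbols
  have hQmono : ∀ q ∈ Submonoid.closure (Scoord ∪ star Scoord),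
      TotallyBounded ((fun f => P (mulLp (fun z => φ z * ex q z) f)) '' B) := by
    intro q hq
    obtain ⟨w, v, hwc, hvc, hwd, hvd, hqeq⟩ := hmono q hq
    obtain ⟨Cw, hCwb⟩ := hclcomp.exists_bound_of_continuousOn hwc.continuousOn
    obtain ⟨Cv, hCvb⟩ := hclcomp.exists_bound_of_continuousOn hvc.continuousOn
    set Cw' := max Cw 0 with hCw'_def
    set Cv' := max Cv 1 with hCv'_def
    have hCw'0 : 0 ≤ Cw' := le_max_right _ _
    have hCv'0 : (0:ℝ) < Cv' := lt_of_lt_of_le one_pos (le_max_right _ _)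
    have hw_ae : ∀ᵐ z ∂(wMeasure Ω h), ‖w z‖ ≤ Cw' := by
      filter_upwards [hae_mem] with z hz
      exact le_trans (hCwb z (subset_closure hz)) (le_max_left _ _)
    have hv_ae : ∀ᵐ z ∂(wMeasure Ω h), ‖v z‖ ≤ Cv' := by
      filter_upwards [hae_mem] with z hz
      exact le_trans (hCvb z (subset_closure hz)) (le_max_left _ _)
    have hwm : MemLp w ⊤ (wMeasure Ω h) := memLp_top_of_bound hwc.aestronglyMeasurable _ hw_ae
    have hvm : MemLp v ⊤ (wMeasure Ω h) := memLp_top_of_bound hvc.aestronglyMeasurable _ hv_ae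
    -- the symbol agrees a.e. with the conj-decomposed one
    have hsym_ae : (fun z => φ z * ex q z)
        =ᵐ[(wMeasure Ω h)] fun z => φ z * ((starRingEnd ℂ) (w z) * v z) := by
      filter_upwards [hae_mem] with z hz
      rw [hex_val q z (subset_closure hz), hqeq ⟨z, subset_closure hz⟩]
    have humKey : MemLp (fun z => φ z * ((starRingEnd ℂ) (w z) * v z)) ⊤ (wMeasure Ω h) :=
      (hsym_mem q).ae_eq hsym_ae
    apply tb_dominated (G := fun f => P (M (mulLp v f))) hCw'0
    · -- domination
      intro f hf f' hf'
      have e1 : P (mulLp (fun z => φ z * ex q z) f) - P (mulLp (fun z => φ z * ex q z) f')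
          = P (mulLp (fun z => φ z * ((starRingEnd ℂ) (w z) * v z)) (f - f')) := by
        rw [← map_sub, ← mulLp_sub (hsym_mem q) f f',
          mulLp_congr_ae (hsym_mem q) humKey hsym_ae (f - f')]
      have e2 : P (M (mulLp v f)) - P (M (mulLp v f'))
          = P (M (mulLp v (f - f'))) := by
        rw [mulLp_sub hvm f f', map_sub, map_sub]
      rw [dist_eq_norm, dist_eq_norm, e1, e2]
      exact key hP hM hφ hwm hvm hwd hCw'0 hw_ae (f - f')
    · -- total boundedness of the comparison family
      have h1 : ∀ f ∈ B, ∃ b ∈ B, mulLp v f = (Cv' : ℂ) • b := by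
        intro f hf
        apply hscale Cv' hCv'0 _ (isBergman_mulLp hvd hvm hf.1)
        calc ‖mulLp v f‖ ≤ Cv' * ‖f‖ := norm_mulLp_le hvc.aestronglyMeasurable hCv'0.le hv_ae f
          _ ≤ Cv' * 1 := by
              apply mul_le_mul_of_nonneg_left _ hCv'0.le
              exact mem_closedBall_zero_iff.mp hf.2
          _ = Cv' := mul_one _
      have h2 : (fun f => P (M (mulLp v f))) '' B
          ⊆ (Cv' : ℂ) • ((fun f => P (M f)) '' B) := by
        rintro x ⟨f, hf, rfl⟩
        obtain ⟨b, hb, he⟩ := h1 f hf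
        refine ⟨P (M b), Set.mem_image_of_mem _ hb, ?_⟩
        dsimp only
        rw [he, ContinuousLinearMap.map_smul, ContinuousLinearMap.map_smul]
      refine TotallyBounded.subset h2 ?_
      rw [show ((Cv' : ℂ) • ((fun f => P (M f)) '' B))
        = (fun x => (Cv' : ℂ) • x) '' ((fun f => P (M f)) '' B) from rfl]
      exact hTB_base.image (uniformContinuous_const_smul _)
  -- total boundedness for all symbols in the span
  have hQspan : ∀ q : C(closure Ω, ℂ),
      q ∈ Submodule.span ℂ ((Submonoid.closure (Scoord ∪ star Scoord) : Submonoid _) : Set _) →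
      TotallyBounded ((fun f => P (mulLp (fun z => φ z * ex q z) f)) '' B) := by
    intro q hq
    induction hq using Submodule.span_induction with
    | mem x hx => exact hQmono x hx
    | zero =>
      apply TotallyBounded.subset _ (Set.finite_singleton (0 : Lp ℂ 2 (wMeasure Ω h))).totallyBounded
      rintro x ⟨f, hf, rfl⟩
      have e1 : mulLp (fun z => φ z * ex (0 : C(closure Ω, ℂ)) z) f = 0 := by
        apply Lp.ext
        filter_upwards [coeFn_mulLp (hsym_mem 0) f, Lp.coeFn_zero ℂ 2 (wMeasure Ω h)] with z e1 e2
        rw [e1, e2, Pi.zero_apply, hex_def]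
        dsimp only
        split <;> simp
      simp only [e1, map_zero, Set.mem_singleton_iff]
    | add x y hx hy ihx ihy =>
      have hsub : (fun f => P (mulLp (fun z => φ z * ex (x + y) z) f)) '' B
          ⊆ ((fun f => P (mulLp (fun z => φ z * ex x z) f)) '' B)
            + ((fun f => P (mulLp (fun z => φ z * ex y z) f)) '' B) := by
        rintro _ ⟨f, hf, rfl⟩
        have e0 : (fun z => φ z * ex (x + y) z)
            = (fun z => φ z * ex x z) + fun z => φ z * ex y z := by
          funext z
          rw [Pi.add_apply, hex_def]
          dsimp only
          split
          · rw [ContinuousMap.add_apply]; ring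
          · ring
        have e1 : P (mulLp (fun z => φ z * ex (x + y) z) f)
            = P (mulLp (fun z => φ z * ex x z) f) + P (mulLp (fun z => φ z * ex y z) f) := by
          rw [e0, mulLp_add_symbol (hsym_mem x) (hsym_mem y) f, map_add]
        dsimp only
        rw [e1]
        exact Set.add_mem_add (Set.mem_image_of_mem _ hf) (Set.mem_image_of_mem _ hf)
      exact TotallyBounded.subset hsub (tb_add ihx ihy)
    | smul c x hx ihx =>
      have hsub : (fun f => P (mulLp (fun z => φ z * ex (c • x) z) f)) '' B
          ⊆ c • ((fun f => P (mulLp (fun z => φ z * ex x z) f)) '' B) := by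
        rintro _ ⟨f, hf, rfl⟩
        have e0 : (fun z => φ z * ex (c • x) z) = c • fun z => φ z * ex x z := by
          funext z
          rw [Pi.smul_apply, hex_def]
          dsimp only
          split
          · rw [ContinuousMap.smul_apply]
            simp only [smul_eq_mul]
            ring
          · simp only [smul_eq_mul]
            ring
        have e1 : P (mulLp (fun z => φ z * ex (c • x) z) f)
            = c • P (mulLp (fun z => φ z * ex x z) f) := by
          rw [e0, mulLp_smul_symbol c (hsym_mem x) f, ContinuousLinearMap.map_smul]
        dsimp only
        rw [e1]
        exact Set.smul_mem_smul_set (Set.mem_image_of_mem _ hf)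
      refine TotallyBounded.subset hsub ?_
      rw [show (c • ((fun f => P (mulLp (fun z => φ z * ex x z) f)) '' B))
        = (fun u => c • u) '' ((fun f => P (mulLp (fun z => φ z * ex x z) f)) '' B) from rfl]
      exact ihx.image (uniformContinuous_const_smul _)
  -- Stone–Weierstrass
  have hsep : (StarAlgebra.adjoin ℂ Scoord).SeparatesPoints := by
    intro x y hxy
    have hxy' : (x : CE n) ≠ (y : CE n) := fun hc => hxy (Subtype.ext hc)
    have hi : ∃ i : Fin n, (x : CE n) i ≠ (y : CE n) i := by
      by_contra hc
      push_neg at hc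
      exact hxy' (PiLp.ext hc)
    obtain ⟨i, hi⟩ := hi
    refine ⟨⇑(coordCM i), ⟨coordCM i,
      StarAlgebra.subset_adjoin ℂ Scoord ⟨i, rfl⟩, rfl⟩, ?_⟩
    simpa [hcoord_def] using hi
  have hdense := ContinuousMap.starSubalgebra_topologicalClosure_eq_top_of_separatesPoints
    (StarAlgebra.adjoin ℂ Scoord) hsep
  set ψres : C(closure Ω, ℂ) :=
    ⟨(closure Ω).restrict ψ, continuousOn_iff_continuous_restrict.mp hψ⟩ with hψres_def
  have hψ_closure : ψres ∈ closure ((StarAlgebra.adjoin ℂ Scoord : Set C(closure Ω, ℂ))) := by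
    rw [← StarSubalgebra.topologicalClosure_coe, hdense]
    trivial
  -- final approximation argument
  show IsCompact (closure ((P ∘L M') '' B))
  apply TotallyBounded.isCompact_of_isClosed _ isClosed_closure
  apply TotallyBounded.closure
  apply tb_approx
  intro δ hδ
  set ε : ℝ := δ / (‖P‖ * Kφ + 1) with hε_def
  have hεpos : 0 < ε := by
    apply div_pos hδ
    have : (0:ℝ) ≤ ‖P‖ * Kφ := mul_nonneg (norm_nonneg _) hKφ0
    linarith
  obtain ⟨p, hpA, hpdist⟩ := Metric.mem_closure_iff.mp hψ_closure ε hεpos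
  have hp_span : p ∈ Submodule.span ℂ
      ((Submonoid.closure (Scoord ∪ star Scoord) : Submonoid _) : Set _) := by
    have h1 : p ∈ Subalgebra.toSubmodule (StarAlgebra.adjoin ℂ Scoord).toSubalgebra := hpA
    rw [StarAlgebra.adjoin_eq_span] at h1
    exact h1
  refine ⟨(fun f => P (mulLp (fun z => φ z * ex p z) f)) '' B, hQspan p hp_span, ?_⟩
  rintro _ ⟨f, hf, rfl⟩
  refine ⟨P (mulLp (fun z => φ z * ex p z) f), Set.mem_image_of_mem _ hf, ?_⟩
  have hfle : ‖f‖ ≤ 1 := mem_closedBall_zero_iff.mp hf.2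
  -- pointwise bound for the difference
  have hKε0 : 0 ≤ Kφ * ε := mul_nonneg hKφ0 hεpos.le
  have hdiff : ∀ᵐ z ∂(wMeasure Ω h),
      ‖(M' f : CE n → ℂ) z - (mulLp (fun z => φ z * ex p z) f : CE n → ℂ) z‖
      ≤ (Kφ * ε) * ‖(f : CE n → ℂ) z‖ := by
    filter_upwards [hM' f, coeFn_mulLp (hsym_mem p) f, hφae, hae_mem] with z e1 e2 e3 e4
    rw [e1, e2]
    have hrw : φ z * ψ z * (f : CE n → ℂ) z - φ z * ex p z * (f : CE n → ℂ) z
        = (φ z * (ψ z - ex p z)) * (f : CE n → ℂ) z := by ring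
    rw [hrw, norm_mul]
    have hψb : ‖ψ z - ex p z‖ ≤ ε := by
      have hz' : z ∈ closure Ω := subset_closure e4
      rw [hex_val p z hz']
      have : ψ z = ψres ⟨z, hz'⟩ := rfl
      rw [this, ← dist_eq_norm]
      exact le_trans (ContinuousMap.dist_apply_le_dist _) hpdist.le
    have h5 : ‖φ z * (ψ z - ex p z)‖ ≤ Kφ * ε := by
      rw [norm_mul]
      exact mul_le_mul e3 hψb (norm_nonneg _) hKφ0
    exact mul_le_mul_of_nonneg_right h5 (norm_nonneg _)
  have hnd : ‖M' f - mulLp (fun z => φ z * ex p z) f‖ ≤ Kφ * ε := by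
    rw [Lp.norm_def]
    have e7 : eLpNorm
        (M' f - mulLp (fun z => φ z * ex p z) f : Lp ℂ 2 (wMeasure Ω h)) 2 (wMeasure Ω h)
        ≤ eLpNorm (fun z => (Kφ * ε) * ‖(f : CE n → ℂ) z‖) 2 (wMeasure Ω h) := by
      apply eLpNorm_mono_ae
      filter_upwards [hdiff, Lp.coeFn_sub (M' f) (mulLp (fun z => φ z * ex p z) f)] with z e8 e9
      rw [e9, Pi.sub_apply, Real.norm_eq_abs,
        _root_.abs_of_nonneg (mul_nonneg hKε0 (norm_nonneg _))]
      exact e8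
    have e10 : eLpNorm (fun z => (Kφ * ε) * ‖(f : CE n → ℂ) z‖) 2 (wMeasure Ω h)
        = (‖(Kφ * ε : ℝ)‖₊ : ℝ≥0∞) * eLpNorm (f : CE n → ℂ) 2 (wMeasure Ω h) := by
      rw [show (fun z => (Kφ * ε) * ‖(f : CE n → ℂ) z‖)
        = (Kφ * ε) • (fun z => ‖(f : CE n → ℂ) z‖) from rfl]
      rw [eLpNorm_const_smul, eLpNorm_norm]
      rfl
    calc (eLpNorm
        (M' f - mulLp (fun z => φ z * ex p z) f : Lp ℂ 2 (wMeasure Ω h)) 2 (wMeasure Ω h)).toReal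
        ≤ ((‖(Kφ * ε : ℝ)‖₊ : ℝ≥0∞) * eLpNorm (f : CE n → ℂ) 2 (wMeasure Ω h)).toReal := by
          apply ENNReal.toReal_mono
          · exact (ENNReal.mul_lt_top ENNReal.coe_lt_top (Lp.memLp f).2).ne
          · rw [← e10]; exact e7
      _ = ‖(Kφ * ε : ℝ)‖ * ‖f‖ := by
          rw [ENNReal.toReal_mul, Lp.norm_def, ENNReal.coe_toReal, coe_nnnorm]
      _ = (Kφ * ε) * ‖f‖ := by
          rw [Real.norm_eq_abs, _root_.abs_of_nonneg hKε0]
      _ ≤ (Kφ * ε) * 1 := mul_le_mul_of_nonneg_left hfle hKε0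
      _ = Kφ * ε := mul_one _
  calc dist ((P ∘L M') f) (P (mulLp (fun z => φ z * ex p z) f))
      = ‖P (M' f - mulLp (fun z => φ z * ex p z) f)‖ := by
        rw [dist_eq_norm, ContinuousLinearMap.comp_apply, ← map_sub]
    _ ≤ ‖P‖ * ‖M' f - mulLp (fun z => φ z * ex p z) f‖ := P.le_opNorm _
    _ ≤ ‖P‖ * (Kφ * ε) := mul_le_mul_of_nonneg_left hnd (norm_nonneg _)
    _ ≤ δ := by
        rw [hε_def, ← mul_assoc]
        have h9 : (0:ℝ) < ‖P‖ * Kφ + 1 := by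
          have : (0:ℝ) ≤ ‖P‖ * Kφ := mul_nonneg (norm_nonneg _) hKφ0
          linarith
        calc ‖P‖ * Kφ * (δ / (‖P‖ * Kφ + 1)) ≤ (‖P‖ * Kφ + 1) * (δ / (‖P‖ * Kφ + 1)) := by
              apply mul_le_mul_of_nonneg_right (by linarith) (div_nonneg hδ.le h9.le)
          _ = δ := by
              rw [mul_comm]
              exact div_mul_cancel₀ δ (ne_of_gt h9)
end
end

section
/- Let X and Y be Hilbert spaces and T : X → Y a bounded linear map. Then T is compact if and only if for every ε > 0 there exist a Hilbert space Z_ε, a compact linear map S_ε : X → Z_ε, and a constant C_ε > 0 such that ‖Tf‖_Y ≤ ε‖f‖_X + C_ε‖S_ε f‖_{Z_ε} for all f ∈ X. -/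
theorem statement17 {X : Type} {Y : Type}
    [NormedAddCommGroup X] [InnerProductSpace ℂ X] [CompleteSpace X]
    [NormedAddCommGroup Y] [InnerProductSpace ℂ Y] [CompleteSpace Y]
    (T : X →L[ℂ] Y) :
    IsCompactOperator T ↔
      ∀ ε > (0 : ℝ), ∃ (Z : Type) (_ : NormedAddCommGroup Z) (_ : InnerProductSpace ℂ Z)
        (_ : CompleteSpace Z) (S : X →L[ℂ] Z) (C : ℝ),
          IsCompactOperator S ∧ 0 < C ∧ ∀ f : X, ‖T f‖ ≤ ε * ‖f‖ + C * ‖S f‖ := by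
  constructor
  · intro hT ε hε
    refine ⟨Y, inferInstance, inferInstance, inferInstance, T, 1, hT, one_pos, fun f => ?_⟩
    have : 0 ≤ ε * ‖f‖ := mul_nonneg hε.le (norm_nonneg f)
    linarith
  · intro h
    refine (isCompactOperator_iff_isCompact_closure_image_closedBall (𝕜₁ := ℂ)
      (T : X →ₛₗ[RingHom.id ℂ] Y) zero_lt_one).2 ?_
    refine TotallyBounded.isCompact_of_isClosed ?_ isClosed_closure
    rw [totallyBounded_closure]
    rw [Metric.totallyBounded_iff]
    intro ε hε
    obtain ⟨Z, _, _, _, S, C, hS, hC, hbound⟩ := h (ε / 3) (by positivity)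
    have hSB : TotallyBounded (S '' Metric.closedBall (0 : X) 1) :=
      ((hS.isCompact_closure_image_closedBall (𝕜₁ := ℂ) 1).totallyBounded).subset
        subset_closure
    have hd : {p : Z × Z | dist p.1 p.2 < ε / (3 * C)} ∈ uniformity Z :=
      Metric.dist_mem_uniformity (by positivity)
    obtain ⟨t, hts, htf, hcov⟩ := totallyBounded_iff_subset.1 hSB _ hd
    have : Finite ↥t := htf.to_subtype
    choose g hg1 hg2 using fun y : t => hts y.2
    refine ⟨Set.range (fun y : t => T (g y)), Set.finite_range _, ?_⟩
    rintro z ⟨x, hx, rfl⟩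
    obtain ⟨y, hy, hxy⟩ := Set.mem_iUnion₂.1 (hcov ⟨x, hx, rfl⟩)
    simp only [Set.mem_setOf_eq] at hxy
    refine Set.mem_iUnion₂.2 ⟨T (g ⟨y, hy⟩), Set.mem_range_self _, ?_⟩
    rw [Metric.mem_ball, dist_eq_norm]
    have h1 : T x - T (g ⟨y, hy⟩) = T (x - g ⟨y, hy⟩) := by rw [map_sub]
    show ‖T x - T (g ⟨y, hy⟩)‖ < ε
    rw [h1]
    calc ‖T (x - g ⟨y, hy⟩)‖ ≤ ε / 3 * ‖x - g ⟨y, hy⟩‖ + C * ‖S (x - g ⟨y, hy⟩)‖ :=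
          hbound _
      _ < ε := by
          have hxn : ‖x‖ ≤ 1 := by simpa using Metric.mem_closedBall.1 hx
          have hgn : ‖g ⟨y, hy⟩‖ ≤ 1 := by
            simpa using Metric.mem_closedBall.1 (hg1 ⟨y, hy⟩)
          have h2 : ‖x - g ⟨y, hy⟩‖ ≤ 2 := by
            calc ‖x - g ⟨y, hy⟩‖ ≤ ‖x‖ + ‖g ⟨y, hy⟩‖ := norm_sub_le _ _
              _ ≤ 2 := by linarith
          have h3 : ‖S (x - g ⟨y, hy⟩)‖ < ε / (3 * C) := by
            rw [map_sub, hg2 ⟨y, hy⟩, ← dist_eq_norm]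
            exact hxy
          have h4 : C * ‖S (x - g ⟨y, hy⟩)‖ < C * (ε / (3 * C)) :=
            (mul_lt_mul_iff_right₀ hC).2 h3
          have h5 : C * (ε / (3 * C)) = ε / 3 := by field_simp
          have h6 : ε / 3 * ‖x - g ⟨y, hy⟩‖ ≤ ε / 3 * 2 :=
            mul_le_mul_of_nonneg_left h2 (by positivity)
          linarith
end
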